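/- arXiv:0711.3636 — 2 statements merged into one kernel-verified Lean document; each statement's English description precedes it below -/
import Mathlib

section
/- If P and A are bounded operators on a Hilbert space H with P positive, and the 2x2 operator matrix [[P, A],[A*, P]] acting on H ⊕ H is positive semidefinite, then ‖A‖ ≤ ‖P‖. -/
/-- The block operator `[[P, A], [A*, P]]` on the Hilbert space `H ⊕₂ H`. -/
noncomputable def blockOp {H : Type*} [NormedAddCommGroup H] [InnerProductSpace ℂ H]
    [CompleteSpace H] (P A : H →L[ℂ] H) : WithLp 2 (H × H) →L[ℂ] WithLp 2 (H × H) :=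
  ((WithLp.prodContinuousLinearEquiv 2 ℂ H H).symm : (H × H) →L[ℂ] WithLp 2 (H × H)).comp
    ((((P.comp (ContinuousLinearMap.fst ℂ H H)) +
        (A.comp (ContinuousLinearMap.snd ℂ H H))).prod
      (((ContinuousLinearMap.adjoint A).comp (ContinuousLinearMap.fst ℂ H H)) +
        (P.comp (ContinuousLinearMap.snd ℂ H H)))).comp
      ((WithLp.prodContinuousLinearEquiv 2 ℂ H H) : WithLp 2 (H × H) →L[ℂ] H × H))

theorem norm_le_of_blockOp_positive {H : Type*} [NormedAddCommGroup H]
    [InnerProductSpace ℂ H] [CompleteSpace H] (P A : H →L[ℂ] H)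
    (hP : P.IsPositive) (hblock : (blockOp P A).IsPositive) : ‖A‖ ≤ ‖P‖ := by
  have key : ∀ x y : H, 0 ≤ Complex.re (inner ℂ (P x + A y) x : ℂ)
      + Complex.re (inner ℂ ((ContinuousLinearMap.adjoint A) x + P y) y : ℂ) := by
    intro x y
    have h := hblock.2 ((WithLp.prodContinuousLinearEquiv 2 ℂ H H).symm (x, y))
    simpa [ContinuousLinearMap.reApplyInnerSelf, blockOp, WithLp.prod_inner_apply, inner_add_left] using h
  have key2 : ∀ x y : H, 0 ≤ Complex.re (inner ℂ (P x) x : ℂ) + Complex.re (inner ℂ (P y) y : ℂ)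
      + 2 * Complex.re (inner ℂ (A y) x : ℂ) := by
    intro x y
    have h := key x y
    have h1 : Complex.re (inner ℂ ((ContinuousLinearMap.adjoint A) x) y : ℂ)
        = Complex.re (inner ℂ (A y) x : ℂ) := by
      rw [ContinuousLinearMap.adjoint_inner_left, ← inner_conj_symm, Complex.conj_re]
    simp only [inner_add_left, Complex.add_re, h1] at h
    linarith
  have hPbound : ∀ w : H, Complex.re (inner ℂ (P w) w : ℂ) ≤ ‖P‖ * ‖w‖ ^ 2 := by
    intro w
    calc Complex.re (inner ℂ (P w) w : ℂ) ≤ ‖(inner ℂ (P w) w : ℂ)‖ := Complex.re_le_norm _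
      _ ≤ ‖P w‖ * ‖w‖ := norm_inner_le_norm _ _
      _ ≤ (‖P‖ * ‖w‖) * ‖w‖ := by
          gcongr; exact P.le_opNorm w
      _ = ‖P‖ * ‖w‖ ^ 2 := by ring
  have key3 : ∀ x y : H, 2 * ‖(inner ℂ (A y) x : ℂ)‖ ≤ ‖P‖ * ‖x‖ ^ 2 + ‖P‖ * ‖y‖ ^ 2 := by
    intro x y
    set c : ℂ := inner ℂ (A y) x with hc
    rcases eq_or_ne c 0 with h0 | h0
    · rw [h0]
      simp only [norm_zero, mul_zero]
      positivity
    · have hcn : (0:ℝ) < ‖c‖ := norm_pos_iff.mpr h0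
      set t : ℂ := -(c / ‖c‖) with ht
      have htnorm : ‖t‖ = 1 := by
        rw [ht, norm_neg, norm_div, Complex.norm_real, Real.norm_eq_abs,
          abs_of_nonneg hcn.le, div_self hcn.ne']
      have h := key2 x (t • y)
      have hA : (inner ℂ (A (t • y)) x : ℂ) = starRingEnd ℂ t * c := by
        rw [map_smul, inner_smul_left]
      have hval : starRingEnd ℂ t * c = ((-‖c‖ : ℝ) : ℂ) := by
        rw [ht, map_neg, map_div₀, Complex.conj_ofReal, neg_mul, div_mul_eq_mul_div,
          mul_comm, Complex.mul_conj, Complex.normSq_eq_norm_sq]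
        push_cast
        rw [neg_eq_iff_eq_neg, neg_neg, sq]
        field_simp
      have hre : Complex.re (inner ℂ (A (t • y)) x : ℂ) = -‖c‖ := by
        rw [hA, hval, Complex.ofReal_re]
      have hPt : Complex.re (inner ℂ (P (t • y)) (t • y) : ℂ)
          = Complex.re (inner ℂ (P y) y : ℂ) := by
        rw [map_smul, inner_smul_left, inner_smul_right, ← mul_assoc,
          mul_comm (starRingEnd ℂ t) t, Complex.mul_conj, Complex.normSq_eq_norm_sq,
          htnorm]
        simp
      rw [hre, hPt] at h
      have hx := hPbound x
      have hy := hPbound y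
      have hty : ‖t • y‖ = ‖y‖ := by rw [norm_smul, htnorm, one_mul]
      linarith
  refine A.opNorm_le_bound (norm_nonneg P) (fun y => ?_)
  by_cases hAy : A y = 0
  · rw [hAy, norm_zero]
    positivity
  · have hAyn : (0:ℝ) < ‖A y‖ := norm_pos_iff.mpr hAy
    have hy0 : y ≠ 0 := by rintro rfl; simp at hAy
    have hyn : (0:ℝ) < ‖y‖ := norm_pos_iff.mpr hy0
    set x : H := ((‖y‖ / ‖A y‖ : ℝ) : ℂ) • A y with hx
    have h := key3 x y
    have hin : ‖(inner ℂ (A y) x : ℂ)‖ = ‖y‖ * ‖A y‖ := by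
      rw [hx, inner_smul_right, norm_mul, Complex.norm_real, Real.norm_eq_abs,
        abs_of_nonneg (by positivity), @inner_self_eq_norm_sq_to_K ℂ, norm_pow]
      rw [RCLike.norm_ofReal, abs_of_nonneg (norm_nonneg _)]
      field_simp
    have hxn : ‖x‖ = ‖y‖ := by
      rw [hx, norm_smul, Complex.norm_real, Real.norm_eq_abs, abs_of_nonneg (by positivity)]
      field_simp
    rw [hin, hxn] at h
    nlinarith
end

section
/- (Smith's stabilization) For any linear map φ : M_n → M_k, the completely bounded norm of φ equals ‖id_k ⊗ φ‖; that is, sup_m ‖id_m ⊗ φ‖ is attained at m = k. -/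
open scoped ComplexOrder

/-- The amplification `id_m ⊗ φ` of a linear map on matrices. -/
noncomputable def ampl {n k : ℕ} (m : ℕ)
    (φ : Matrix (Fin n) (Fin n) ℂ →ₗ[ℂ] Matrix (Fin k) (Fin k) ℂ) :
    Matrix (Fin m × Fin n) (Fin m × Fin n) ℂ →ₗ[ℂ]
      Matrix (Fin m × Fin k) (Fin m × Fin k) ℂ where
  toFun M := Matrix.of fun p q => φ (Matrix.of fun a b => M (p.1, a) (q.1, b)) p.2 q.2
  map_add' M N := by
    ext p q
    show φ (Matrix.of fun a b => (M + N) (p.1, a) (q.1, b)) p.2 q.2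
        = φ (Matrix.of fun a b => M (p.1, a) (q.1, b)) p.2 q.2
          + φ (Matrix.of fun a b => N (p.1, a) (q.1, b)) p.2 q.2
    rw [show (Matrix.of fun a b => (M + N) (p.1, a) (q.1, b))
        = (Matrix.of fun a b => M (p.1, a) (q.1, b))
          + (Matrix.of fun a b => N (p.1, a) (q.1, b)) from rfl, map_add]
    simp
  map_smul' c M := by
    ext p q
    show φ (Matrix.of fun a b => (c • M) (p.1, a) (q.1, b)) p.2 q.2
        = c • φ (Matrix.of fun a b => M (p.1, a) (q.1, b)) p.2 q.2
    rw [show (Matrix.of fun a b => (c • M) (p.1, a) (q.1, b))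
        = c • (Matrix.of fun a b => M (p.1, a) (q.1, b)) from rfl, map_smul]
    simp

/-- Operator (spectral) norm of a square complex matrix. -/
noncomputable def opN {n : Type*} [Fintype n] [DecidableEq n] (X : Matrix n n ℂ) : ℝ :=
  ‖(Matrix.toEuclideanCLM (𝕜 := ℂ) X : EuclideanSpace ℂ n →L[ℂ] EuclideanSpace ℂ n)‖

/-- Induced norm (w.r.t. operator norms) of a linear map between matrix algebras. -/
noncomputable def mapNorm {a b : Type*} [Fintype a] [DecidableEq a] [Fintype b] [DecidableEq b]
    (ψ : Matrix a a ℂ →ₗ[ℂ] Matrix b b ℂ) : ℝ :=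
  sSup {r : ℝ | ∃ X : Matrix a a ℂ, opN X ≤ 1 ∧ r = opN (ψ X)}

/-- The completely bounded norm `sup_m ‖id_m ⊗ φ‖`. -/
noncomputable def cbNorm {n k : ℕ}
    (φ : Matrix (Fin n) (Fin n) ℂ →ₗ[ℂ] Matrix (Fin k) (Fin k) ℂ) : ℝ :=
  ⨆ m : ℕ, mapNorm (ampl (m + 1) φ)

/-- Trace norm of a matrix: the trace of `√(XᴴX)`. -/
noncomputable def traceNorm {a b : Type*} [Fintype a] [Fintype b] [DecidableEq b]
    (X : Matrix a b ℂ) : ℝ :=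
  (((((Matrix.posSemidef_conjTranspose_mul_self X).1.eigenvectorUnitary : Matrix b b ℂ) *
    Matrix.diagonal (((↑) : ℝ → ℂ) ∘ (√·) ∘ (Matrix.posSemidef_conjTranspose_mul_self X).1.eigenvalues) *
    (star (Matrix.posSemidef_conjTranspose_mul_self X).1.eigenvectorUnitary : Matrix b b ℂ))).trace).re

/-- Induced trace-norm of a linear map between matrix algebras. -/
noncomputable def tMapNorm {a b : Type*} [Fintype a] [DecidableEq a] [Fintype b] [DecidableEq b]
    (ψ : Matrix a a ℂ →ₗ[ℂ] Matrix b b ℂ) : ℝ :=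
  sSup {r : ℝ | ∃ X : Matrix a a ℂ, traceNorm X ≤ 1 ∧ r = traceNorm (ψ X)}

namespace SmithAux
open Matrix

variable {ι κ γ : Type*} [Fintype ι] [DecidableEq ι] [Fintype κ] [DecidableEq κ]
  [Fintype γ] [DecidableEq γ]

/-- Euclidean norm of a bare vector. -/
noncomputable def enorm (x : ι → ℂ) : ℝ := ‖(WithLp.equiv 2 (ι → ℂ)).symm x‖

lemma enorm_nonneg (x : ι → ℂ) : 0 ≤ enorm x := norm_nonneg _

lemma enorm_sq (x : ι → ℂ) : enorm x ^ 2 = ∑ i, ‖x i‖ ^ 2 := by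
  rw [enorm, EuclideanSpace.norm_eq, Real.sq_sqrt (by positivity)]
  rfl

lemma enorm_le_of_sq_le_sq {x : ι → ℂ} {y : κ → ℂ}
    (h : ∑ i, ‖x i‖ ^ 2 ≤ ∑ j, ‖y j‖ ^ 2) : enorm x ≤ enorm y := by
  have := enorm_sq x; have := enorm_sq y
  nlinarith [enorm_nonneg x, enorm_nonneg y]

lemma inner_eq_dot (x y : ι → ℂ) :
    (inner ℂ ((WithLp.equiv 2 (ι → ℂ)).symm x) ((WithLp.equiv 2 (ι → ℂ)).symm y) : ℂ)
      = star x ⬝ᵥ y := by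
  simp [PiLp.inner_apply, dotProduct, RCLike.inner_apply, dotProduct, mul_comm]

lemma toCLM_apply (X : Matrix ι ι ℂ) (x : ι → ℂ) :
    Matrix.toEuclideanCLM (𝕜 := ℂ) X ((WithLp.equiv 2 (ι → ℂ)).symm x)
      = (WithLp.equiv 2 (ι → ℂ)).symm (X.mulVec x) := by
  exact Matrix.toEuclideanCLM_toLp X x

lemma enorm_mulVec_le (X : Matrix ι ι ℂ) (x : ι → ℂ) :
    enorm (X.mulVec x) ≤ opN X * enorm x := by
  have := (Matrix.toEuclideanCLM (𝕜 := ℂ) X).le_opNorm ((WithLp.equiv 2 (ι → ℂ)).symm x)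
  rwa [toCLM_apply] at this

lemma dot_le_opN (X : Matrix ι ι ℂ) (x y : ι → ℂ) :
    ‖star y ⬝ᵥ X.mulVec x‖ ≤ opN X * enorm y * enorm x := by
  rw [← inner_eq_dot]
  calc ‖(inner ℂ ((WithLp.equiv 2 (ι → ℂ)).symm y) ((WithLp.equiv 2 (ι → ℂ)).symm (X.mulVec x)) : ℂ)‖
      ≤ enorm y * enorm (X.mulVec x) := norm_inner_le_norm _ _
    _ ≤ enorm y * (opN X * enorm x) := by
        have := enorm_mulVec_le X x
        have := enorm_nonneg (ι := ι) y
        nlinarith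
    _ = opN X * enorm y * enorm x := by ring

lemma opN_le_of_dot {X : Matrix ι ι ℂ} {c : ℝ} (hc : 0 ≤ c)
    (h : ∀ x y : ι → ℂ, enorm x ≤ 1 → enorm y ≤ 1 → ‖star y ⬝ᵥ X.mulVec x‖ ≤ c) :
    opN X ≤ c := by
  apply ContinuousLinearMap.opNorm_le_bound _ hc
  intro z
  by_cases hz : z = 0
  · simp [hz]
  have hz' : 0 < ‖z‖ := norm_pos_iff.mpr hz
  set T := Matrix.toEuclideanCLM (𝕜 := ℂ) X
  by_cases hTz : T z = 0
  · rw [hTz]; simp; positivity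
  have hTz' : 0 < ‖T z‖ := norm_pos_iff.mpr hTz
  set x : EuclideanSpace ℂ ι := ((‖z‖⁻¹ : ℝ) : ℂ) • z with hx
  set y : EuclideanSpace ℂ ι := ((‖T z‖⁻¹ : ℝ) : ℂ) • T z with hy
  have hxn : ‖x‖ ≤ 1 := by
    rw [hx, norm_smul, Complex.norm_real, Real.norm_eq_abs,
      abs_of_nonneg (by positivity : (0:ℝ) ≤ ‖z‖⁻¹), inv_mul_cancel₀ (ne_of_gt hz')]
  have hyn : ‖y‖ ≤ 1 := by
    rw [hy, norm_smul, Complex.norm_real, Real.norm_eq_abs,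
      abs_of_nonneg (by positivity : (0:ℝ) ≤ ‖T z‖⁻¹), inv_mul_cancel₀ (ne_of_gt hTz')]
  have key : ‖(inner ℂ y (T x) : ℂ)‖ ≤ c := by
    have := h (WithLp.equiv 2 (ι → ℂ) x) (WithLp.equiv 2 (ι → ℂ) y)
    rw [← inner_eq_dot, ← toCLM_apply] at this
    simp only [Equiv.symm_apply_apply] at this
    exact this (by simpa [enorm] using hxn) (by simpa [enorm] using hyn)
  have hinner : (inner ℂ y (T x) : ℂ)
      = ((‖T z‖⁻¹ : ℝ) : ℂ) * (((‖z‖⁻¹ : ℝ) : ℂ) * (inner ℂ (T z) (T z) : ℂ)) := by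
    rw [hx, hy, _root_.map_smul, inner_smul_left, inner_smul_right, Complex.conj_ofReal]
  have key2 : ‖T z‖ * ‖z‖⁻¹ ≤ c := by
    have e : ‖(inner ℂ y (T x) : ℂ)‖ = ‖T z‖ * ‖z‖⁻¹ := by
      rw [hinner, inner_self_eq_norm_sq_to_K]
      simp only [norm_mul, norm_pow, Complex.norm_real, RCLike.norm_ofReal,
        Real.norm_eq_abs, abs_norm, abs_of_nonneg (inv_nonneg.mpr hz'.le),
        abs_of_nonneg (inv_nonneg.mpr hTz'.le)]
      field_simp
    rw [← e]; exact key
  have := mul_le_mul_of_nonneg_right key2 (le_of_lt hz')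
  rwa [mul_assoc, inv_mul_cancel₀ (ne_of_gt hz'), mul_one] at this


lemma star_dot_conjT_mul (M : Matrix ι κ ℂ) (u : κ → ℂ) :
    star u ⬝ᵥ (Mᴴ * M) *ᵥ u = star (M *ᵥ u) ⬝ᵥ (M *ᵥ u) := by
  rw [← Matrix.mulVec_mulVec, Matrix.star_mulVec, ← Matrix.dotProduct_mulVec]

lemma re_star_dot_self (w : ι → ℂ) : (star w ⬝ᵥ w).re = ∑ i, ‖w i‖ ^ 2 := by
  rw [dotProduct, Complex.re_sum]
  refine Finset.sum_congr rfl fun i _ => ?_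
  rw [Pi.star_apply, RCLike.star_def, RCLike.conj_mul]
  norm_cast

lemma enorm_mulVec_sq (M : Matrix ι κ ℂ) (u : κ → ℂ) :
    enorm (M *ᵥ u) ^ 2 = (star u ⬝ᵥ (Mᴴ * M) *ᵥ u).re := by
  rw [star_dot_conjT_mul, re_star_dot_self, enorm_sq]

lemma mulVec_contraction {M : Matrix ι κ ℂ} {χ : κ → ℝ}
    (hM : Mᴴ * M = Matrix.diagonal (fun i => (χ i : ℂ))) (hχ : ∀ i, χ i ≤ 1) (u : κ → ℂ) :
    enorm (M *ᵥ u) ≤ enorm u := by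
  have hsq : enorm (M *ᵥ u) ^ 2 ≤ enorm u ^ 2 := by
    rw [enorm_mulVec_sq, hM, enorm_sq]
    have e : (star u ⬝ᵥ Matrix.diagonal (fun i => (χ i : ℂ)) *ᵥ u).re
        = ∑ i, χ i * ‖u i‖ ^ 2 := by
      rw [dotProduct, Complex.re_sum]
      refine Finset.sum_congr rfl fun i _ => ?_
      rw [Matrix.mulVec_diagonal, Pi.star_apply, RCLike.star_def,
        show (starRingEnd ℂ) (u i) * ((χ i : ℂ) * u i)
          = (χ i : ℂ) * ((starRingEnd ℂ) (u i) * u i) by ring, RCLike.conj_mul]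
      simp [Complex.mul_re, ← Complex.ofReal_pow]
    rw [e]
    refine Finset.sum_le_sum fun i _ => ?_
    nlinarith [sq_nonneg (‖u i‖), hχ i]
  nlinarith [enorm_nonneg (M *ᵥ u), enorm_nonneg u]

lemma re_trace_conjT_mul (M : Matrix ι κ ℂ) :
    (Matrix.trace (Mᴴ * M)).re = ∑ i, ∑ j, ‖M i j‖ ^ 2 := by
  have e : (Matrix.trace (Mᴴ * M)).re = ∑ j, ∑ p, ‖M p j‖ ^ 2 := by
    rw [Matrix.trace, Complex.re_sum]
    refine Finset.sum_congr rfl fun j _ => ?_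
    rw [Matrix.diag_apply, Matrix.mul_apply, Complex.re_sum]
    refine Finset.sum_congr rfl fun p _ => ?_
    rw [Matrix.conjTranspose_apply, RCLike.star_def, RCLike.conj_mul]
    norm_cast
  rw [e, Finset.sum_comm]

/-- Polar-type decomposition suitable for the Schmidt argument. -/
lemma polar (A : Matrix ι κ ℂ) :
    ∃ (V : Matrix ι κ ℂ) (B : Matrix κ κ ℂ),
      A = V * B ∧ (∀ u, enorm (V *ᵥ u) ≤ enorm u) ∧
      (∑ i, ∑ j, ‖B i j‖ ^ 2) = ∑ i, ∑ j, ‖A i j‖ ^ 2 := by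
  classical
  have hherm : (Aᴴ * A).IsHermitian := Matrix.isHermitian_conjTranspose_mul_self A
  set lam := hherm.eigenvalues with hlam
  have hlam0 : ∀ i, 0 ≤ lam i :=
    (Matrix.posSemidef_conjTranspose_mul_self A).eigenvalues_nonneg
  set Q : Matrix κ κ ℂ := (hherm.eigenvectorUnitary : Matrix κ κ ℂ) with hQdef
  have hQ1 : star Q * Q = 1 := Matrix.mem_unitaryGroup_iff'.mp hherm.eigenvectorUnitary.2
  have hQ2 : Q * star Q = 1 := Matrix.mem_unitaryGroup_iff.mp hherm.eigenvectorUnitary.2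
  set D : Matrix κ κ ℂ := Matrix.diagonal (RCLike.ofReal ∘ lam) with hD
  have hspec : Aᴴ * A = Q * D * star Q := hherm.spectral_theorem
  have hQHQ : star Q * (Aᴴ * A) * Q = D := by
    rw [hspec, show star Q * (Q * D * star Q) * Q = (star Q * Q) * D * (star Q * Q) by
      simp [Matrix.mul_assoc], hQ1, Matrix.one_mul, Matrix.mul_one]
  set s : κ → ℝ := fun i => Real.sqrt (lam i) with hs
  have hss : ∀ i, s i * s i = lam i := fun i => Real.mul_self_sqrt (hlam0 i)
  set B : Matrix κ κ ℂ := Matrix.diagonal (fun i => (s i : ℂ)) * star Q with hB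
  set t : κ → ℂ := fun i => if lam i = 0 then 0 else (((s i)⁻¹ : ℝ) : ℂ) with ht
  set V : Matrix ι κ ℂ := A * Q * Matrix.diagonal t with hV
  set χ : κ → ℝ := fun i => if lam i = 0 then 0 else 1 with hchi
  have hAQAQ : (A * Q)ᴴ * (A * Q) = D := by
    rw [Matrix.conjTranspose_mul, show Qᴴ * Aᴴ * (A * Q) = star Q * (Aᴴ * A) * Q by
      simp [Matrix.mul_assoc, Matrix.star_eq_conjTranspose], hQHQ]
  have hcol : ∀ i, lam i = 0 → ∀ p, (A * Q) p i = 0 := by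
    intro i hi p
    have h1 : ((A * Q)ᴴ * (A * Q)) i i = D i i := by rw [hAQAQ]
    have h2 : ∑ q, ‖(A * Q) q i‖ ^ 2 = 0 := by
      have h3 := congrArg Complex.re h1
      rw [Matrix.mul_apply, Complex.re_sum] at h3
      have h4 : ∀ q ∈ Finset.univ, ((A * Q)ᴴ i q * (A * Q) q i).re = ‖(A * Q) q i‖ ^ 2 := by
        intro q _
        rw [Matrix.conjTranspose_apply, RCLike.star_def, RCLike.conj_mul]
        norm_cast
      rw [Finset.sum_congr rfl h4] at h3
      rw [h3, hD, Matrix.diagonal_apply_eq]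
      simp [hi]
    have h5 := (Finset.sum_eq_zero_iff_of_nonneg
      (fun q _ => by positivity)).mp h2 p (Finset.mem_univ p)
    have := pow_eq_zero_iff (n := 2) (by norm_num) |>.mp h5
    exact norm_eq_zero.mp this
  have hAQχ : A * Q * Matrix.diagonal (fun i => t i * (s i : ℂ)) = A * Q := by
    ext p i
    rw [Matrix.mul_diagonal]
    by_cases hi : lam i = 0
    · rw [hcol i hi p, zero_mul]
    · have hsne : s i ≠ 0 := by
        rw [hs]; exact Real.sqrt_ne_zero'.mpr (lt_of_le_of_ne (hlam0 i) (Ne.symm hi))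
      have : t i * (s i : ℂ) = 1 := by
        rw [ht]; simp only [hi, if_false]
        rw [← Complex.ofReal_mul, inv_mul_cancel₀ hsne, Complex.ofReal_one]
      rw [this, mul_one]
  have hVB : V * B = A := by
    rw [hV, hB]
    calc A * Q * Matrix.diagonal t * (Matrix.diagonal (fun i => (s i : ℂ)) * star Q)
        = A * Q * (Matrix.diagonal t * Matrix.diagonal fun i => (s i : ℂ)) * star Q := by
          simp only [Matrix.mul_assoc]
      _ = A * Q * star Q := by rw [Matrix.diagonal_mul_diagonal, hAQχ]
      _ = A := by rw [Matrix.mul_assoc, hQ2, Matrix.mul_one]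
  have hVV : Vᴴ * V = Matrix.diagonal (fun i => (χ i : ℂ)) := by
    have hstep : Vᴴ * V = Matrix.diagonal (star t) * D * Matrix.diagonal t := by
      rw [hV, Matrix.conjTranspose_mul, Matrix.conjTranspose_mul, Matrix.diagonal_conjTranspose,
        show Matrix.diagonal (star t) * (Qᴴ * Aᴴ) * (A * Q * Matrix.diagonal t)
          = Matrix.diagonal (star t) * (star Q * (Aᴴ * A) * Q) * Matrix.diagonal t by
        simp [Matrix.mul_assoc, Matrix.star_eq_conjTranspose], hQHQ]
    rw [hstep, hD, Matrix.diagonal_mul_diagonal, Matrix.diagonal_mul_diagonal]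
    refine congrArg Matrix.diagonal (funext fun i => ?_)
    rw [Pi.star_apply, Function.comp_apply]
    by_cases hi : lam i = 0
    · simp [ht, hchi, hi]
    · have hsne : s i ≠ 0 := by
        rw [hs]; exact Real.sqrt_ne_zero'.mpr (lt_of_le_of_ne (hlam0 i) (Ne.symm hi))
      rw [ht, hchi]
      simp only [if_neg hi]
      rw [RCLike.star_def, Complex.conj_ofReal,
        show (RCLike.ofReal (lam i) : ℂ) = ((lam i : ℝ) : ℂ) from rfl,
        ← Complex.ofReal_mul, ← Complex.ofReal_mul]
      congr 1
      rw [← hss i]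
      field_simp
  have hdd : Matrix.diagonal (star fun i => ((s i : ℝ) : ℂ)) *
      Matrix.diagonal (fun i => ((s i : ℝ) : ℂ)) = D := by
    rw [Matrix.diagonal_mul_diagonal]
    refine congrArg Matrix.diagonal (funext fun i => ?_)
    rw [Pi.star_apply, RCLike.star_def, Complex.conj_ofReal,
      ← Complex.ofReal_mul, hss i]
    rfl
  have hBB : Bᴴ * B = Aᴴ * A := by
    have hBH : Bᴴ = Q * Matrix.diagonal (star fun i => ((s i : ℝ) : ℂ)) := by
      rw [hB, Matrix.conjTranspose_mul, Matrix.diagonal_conjTranspose,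
        Matrix.star_eq_conjTranspose, Matrix.conjTranspose_conjTranspose]
    rw [hBH, hB]
    calc Q * Matrix.diagonal (star fun i => ((s i : ℝ) : ℂ)) *
          (Matrix.diagonal (fun i => ((s i : ℝ) : ℂ)) * star Q)
        = Q * (Matrix.diagonal (star fun i => ((s i : ℝ) : ℂ)) *
            Matrix.diagonal fun i => ((s i : ℝ) : ℂ)) * star Q := by
          simp only [Matrix.mul_assoc]
      _ = Q * D * star Q := by rw [hdd]
      _ = Aᴴ * A := hspec.symm
  refine ⟨V, B, hVB.symm, ?_, ?_⟩
  · intro u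
    exact mulVec_contraction hVV (fun i => by by_cases hi : lam i = 0 <;> simp [hchi, hi]) u
  · have e1 := re_trace_conjT_mul B
    have e2 := re_trace_conjT_mul A
    rw [← e1, ← e2, hBB]


open scoped Kronecker

lemma kron_one_mulVec (V : Matrix ι κ ℂ) (x : κ × γ → ℂ) (p : ι) (a : γ) :
    ((V ⊗ₖ (1 : Matrix γ γ ℂ)) *ᵥ x) (p, a) = (V *ᵥ fun q => x (q, a)) p := by
  simp [Matrix.mulVec, dotProduct, Fintype.sum_prod_type, Matrix.one_apply,
    mul_ite, mul_zero, mul_one, ite_mul, zero_mul, Finset.sum_ite_eq, Finset.sum_ite_eq']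

lemma enorm_kron_one_mulVec {V : Matrix ι κ ℂ} (hV : ∀ u, enorm (V *ᵥ u) ≤ enorm u)
    (x : κ × γ → ℂ) : enorm ((V ⊗ₖ (1 : Matrix γ γ ℂ)) *ᵥ x) ≤ enorm x := by
  have h1 : enorm ((V ⊗ₖ (1 : Matrix γ γ ℂ)) *ᵥ x) ^ 2 ≤ enorm x ^ 2 := by
    rw [enorm_sq, enorm_sq, Fintype.sum_prod_type, Fintype.sum_prod_type]
    calc ∑ p : ι, ∑ a : γ, ‖((V ⊗ₖ (1 : Matrix γ γ ℂ)) *ᵥ x) (p, a)‖ ^ 2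
        = ∑ a : γ, ∑ p : ι, ‖(V *ᵥ fun q => x (q, a)) p‖ ^ 2 := by
          rw [Finset.sum_comm]
          exact Finset.sum_congr rfl fun a _ => Finset.sum_congr rfl fun p _ => by
            rw [kron_one_mulVec]
      _ = ∑ a : γ, enorm (V *ᵥ fun q => x (q, a)) ^ 2 :=
          Finset.sum_congr rfl fun a _ => (enorm_sq _).symm
      _ ≤ ∑ a : γ, enorm (fun q => x (q, a)) ^ 2 := Finset.sum_le_sum fun a _ => by
          have h := hV (fun q => x (q, a))
          nlinarith [enorm_nonneg (V *ᵥ fun q => x (q, a)), enorm_nonneg (fun q => x (q, a))]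
      _ = ∑ a : γ, ∑ q : κ, ‖x (q, a)‖ ^ 2 := Finset.sum_congr rfl fun a _ => enorm_sq _
      _ = ∑ q : κ, ∑ a : γ, ‖x (q, a)‖ ^ 2 := Finset.sum_comm
  nlinarith [enorm_nonneg ((V ⊗ₖ (1 : Matrix γ γ ℂ)) *ᵥ x), enorm_nonneg x]

lemma dot_conjT_mul_mul {α β : Type*} [Fintype α] [Fintype β]
    (M : Matrix α β ℂ) (X : Matrix α α ℂ) (N : Matrix α β ℂ) (x y : β → ℂ) :
    star y ⬝ᵥ (Mᴴ * X * N) *ᵥ x = star (M *ᵥ y) ⬝ᵥ X *ᵥ (N *ᵥ x) := by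
  rw [← Matrix.mulVec_mulVec, ← Matrix.mulVec_mulVec, Matrix.star_mulVec,
    ← Matrix.dotProduct_mulVec]

lemma opN_nonneg (X : Matrix ι ι ℂ) : 0 ≤ opN X := norm_nonneg _

lemma opN_conj {α β : Type*} [Fintype α] [DecidableEq α] [Fintype β] [DecidableEq β]
    (M N : Matrix α β ℂ) (X : Matrix α α ℂ)
    (hM : ∀ u, enorm (M *ᵥ u) ≤ enorm u) (hN : ∀ u, enorm (N *ᵥ u) ≤ enorm u)
    (hX : opN X ≤ 1) : opN (Mᴴ * X * N) ≤ 1 := by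
  apply opN_le_of_dot zero_le_one
  intro x y hx hy
  rw [dot_conjT_mul_mul]
  calc ‖star (M *ᵥ y) ⬝ᵥ X *ᵥ (N *ᵥ x)‖ ≤ opN X * enorm (M *ᵥ y) * enorm (N *ᵥ x) :=
        dot_le_opN X (N *ᵥ x) (M *ᵥ y)
    _ ≤ 1 := by
        have h6 : enorm (M *ᵥ y) ≤ 1 := (hM y).trans hy
        have h7 : enorm (N *ᵥ x) ≤ 1 := (hN x).trans hx
        have h8 : opN X * enorm (M *ᵥ y) ≤ 1 := by
          nlinarith [opN_nonneg X, enorm_nonneg (M *ᵥ y)]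
        nlinarith [enorm_nonneg (N *ᵥ x), mul_nonneg (opN_nonneg X) (enorm_nonneg (M *ᵥ y))]

/-- Sesquilinear pairing `u† M v`. -/
noncomputable def pair {α : Type*} [Fintype α] (M : Matrix α α ℂ) (u v : α → ℂ) : ℂ :=
  star u ⬝ᵥ M *ᵥ v

lemma pair_outer {α β : Type*} [Fintype α] [Fintype β]
    (Y : Matrix (β × α) (β × α) ℂ) (η ξ : β × α → ℂ) :
    star η ⬝ᵥ Y *ᵥ ξ = ∑ p : β, ∑ q : β,
      pair (Matrix.of fun i j => Y (p, i) (q, j)) (fun i => η (p, i)) (fun j => ξ (q, j)) := by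
  simp only [pair, dotProduct, Matrix.mulVec, Pi.star_apply, Matrix.of_apply,
    Fintype.sum_prod_type, Finset.mul_sum, Finset.sum_mul]
  refine Finset.sum_congr rfl fun p _ => ?_
  rw [Finset.sum_comm]

lemma pair_expand {α : Type*} [Fintype α] (M : Matrix α α ℂ) (u v : α → ℂ) :
    pair M u v = ∑ i, ∑ j, (starRingEnd ℂ) (u i) * M i j * v j := by
  simp only [pair, dotProduct, Matrix.mulVec, Pi.star_apply, Finset.mul_sum, RCLike.star_def]
  exact Finset.sum_congr rfl fun i _ => Finset.sum_congr rfl fun j _ => by ring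

lemma pair_sum_smul {α : Type*} [Fintype α] {β : Type*} [Fintype β]
    (f : β → Matrix α α ℂ) (c : β → ℂ) (u v : α → ℂ) :
    pair (∑ x : β, c x • f x) u v = ∑ x : β, c x * pair (f x) u v := by
  rw [pair_expand]
  calc ∑ i, ∑ j, (starRingEnd ℂ) (u i) * (∑ x : β, c x • f x) i j * v j
      = ∑ i, ∑ j, ∑ x : β, c x * ((starRingEnd ℂ) (u i) * f x i j * v j) := by
        refine Finset.sum_congr rfl fun i _ => Finset.sum_congr rfl fun j _ => ?_
        rw [Matrix.sum_apply, Finset.mul_sum, Finset.sum_mul]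
        refine Finset.sum_congr rfl fun x _ => ?_
        rw [Matrix.smul_apply, smul_eq_mul]; ring
    _ = ∑ i, ∑ x : β, ∑ j, c x * ((starRingEnd ℂ) (u i) * f x i j * v j) :=
        Finset.sum_congr rfl fun i _ => Finset.sum_comm
    _ = ∑ x : β, ∑ i, ∑ j, c x * ((starRingEnd ℂ) (u i) * f x i j * v j) := Finset.sum_comm
    _ = ∑ x : β, c x * pair (f x) u v := by
        refine Finset.sum_congr rfl fun x _ => ?_
        rw [pair_expand, Finset.mul_sum]
        refine Finset.sum_congr rfl fun i _ => ?_
        rw [Finset.mul_sum]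

lemma pair_rows {k m : ℕ} (M : Matrix (Fin k) (Fin k) ℂ)
    (W V : Matrix (Fin m) (Fin k) ℂ) (G B : Matrix (Fin k) (Fin k) ℂ) (p q : Fin m) :
    pair M (fun i => (W * G) p i) (fun j => (V * B) q j)
      = ∑ i', ∑ j', ((starRingEnd ℂ) (W p i') * V q j')
          * pair M (fun i => G i' i) (fun j => B j' j) := by
  rw [pair_expand]
  calc ∑ i, ∑ j, (starRingEnd ℂ) ((W * G) p i) * M i j * (V * B) q j
      = ∑ i, ∑ j, ∑ i', ∑ j', ((starRingEnd ℂ) (W p i') * V q j')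
          * ((starRingEnd ℂ) (G i' i) * M i j * B j' j) := by
        refine Finset.sum_congr rfl fun i _ => Finset.sum_congr rfl fun j _ => ?_
        rw [Matrix.mul_apply, Matrix.mul_apply, map_sum, Finset.sum_mul, Finset.sum_mul]
        refine Finset.sum_congr rfl fun i' _ => ?_
        rw [Finset.mul_sum]
        refine Finset.sum_congr rfl fun j' _ => ?_
        rw [_root_.map_mul]; ring
    _ = ∑ i, ∑ i', ∑ j, ∑ j', ((starRingEnd ℂ) (W p i') * V q j')
          * ((starRingEnd ℂ) (G i' i) * M i j * B j' j) :=
        Finset.sum_congr rfl fun i _ => Finset.sum_comm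
    _ = ∑ i', ∑ i, ∑ j, ∑ j', ((starRingEnd ℂ) (W p i') * V q j')
          * ((starRingEnd ℂ) (G i' i) * M i j * B j' j) := Finset.sum_comm
    _ = ∑ i', ∑ i, ∑ j', ∑ j, ((starRingEnd ℂ) (W p i') * V q j')
          * ((starRingEnd ℂ) (G i' i) * M i j * B j' j) :=
        Finset.sum_congr rfl fun i' _ => Finset.sum_congr rfl fun i _ => Finset.sum_comm
    _ = ∑ i', ∑ j', ∑ i, ∑ j, ((starRingEnd ℂ) (W p i') * V q j')
          * ((starRingEnd ℂ) (G i' i) * M i j * B j' j) :=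
        Finset.sum_congr rfl fun i' _ => Finset.sum_comm
    _ = ∑ i', ∑ j', ((starRingEnd ℂ) (W p i') * V q j')
          * pair M (fun i => G i' i) (fun j => B j' j) := by
        refine Finset.sum_congr rfl fun i' _ => Finset.sum_congr rfl fun j' _ => ?_
        rw [pair_expand, Finset.mul_sum]
        refine Finset.sum_congr rfl fun i _ => ?_
        rw [Finset.mul_sum]

lemma conj_block {n k m : ℕ} (X : Matrix (Fin m × Fin n) (Fin m × Fin n) ℂ)
    (V W : Matrix (Fin m) (Fin k) ℂ) (i' j' : Fin k) :
    (Matrix.of fun (a b : Fin n) => ((W ⊗ₖ (1 : Matrix (Fin n) (Fin n) ℂ))ᴴ * X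
        * (V ⊗ₖ (1 : Matrix (Fin n) (Fin n) ℂ))) (i', a) (j', b))
      = ∑ pq : Fin m × Fin m, ((starRingEnd ℂ) (W pq.1 i') * V pq.2 j') •
          (Matrix.of fun (a b : Fin n) => X (pq.1, a) (pq.2, b)) := by
  ext a b
  simp only [Matrix.of_apply, Finset.sum_apply, Matrix.sum_apply, Matrix.smul_apply,
    smul_eq_mul, Matrix.mul_apply, Matrix.conjTranspose_apply, Matrix.kroneckerMap_apply,
    Matrix.one_apply, Fintype.sum_prod_type, mul_ite, ite_mul, mul_one, one_mul,
    mul_zero, zero_mul, apply_ite (star : ℂ → ℂ), star_zero, RCLike.star_def,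
    Finset.sum_ite_eq, Finset.sum_ite_eq', Finset.mem_univ, if_true]
  rw [Finset.sum_comm]
  refine Finset.sum_congr rfl fun p _ => ?_
  rw [Finset.sum_mul]
  refine Finset.sum_congr rfl fun q _ => ?_
  ring


lemma ampl_dot {n k m : ℕ} (φ : Matrix (Fin n) (Fin n) ℂ →ₗ[ℂ] Matrix (Fin k) (Fin k) ℂ)
    (X : Matrix (Fin m × Fin n) (Fin m × Fin n) ℂ)
    (V W : Matrix (Fin m) (Fin k) ℂ) (B G : Matrix (Fin k) (Fin k) ℂ) :
    star (fun p : Fin m × Fin k => (W * G) p.1 p.2) ⬝ᵥ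
        (ampl m φ X) *ᵥ (fun q : Fin m × Fin k => (V * B) q.1 q.2)
      = star (fun p : Fin k × Fin k => G p.1 p.2) ⬝ᵥ
        (ampl k φ ((W ⊗ₖ (1 : Matrix (Fin n) (Fin n) ℂ))ᴴ * X *
          (V ⊗ₖ (1 : Matrix (Fin n) (Fin n) ℂ)))) *ᵥ (fun q : Fin k × Fin k => B q.1 q.2) := by
  rw [pair_outer, pair_outer]
  calc (∑ p : Fin m, ∑ q : Fin m,
        pair (Matrix.of fun i j => (ampl m φ X) (p, i) (q, j))
          (fun i => (W * G) p i) (fun j => (V * B) q j))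
      = ∑ p : Fin m, ∑ q : Fin m, ∑ i', ∑ j',
          ((starRingEnd ℂ) (W p i') * V q j') *
            pair (φ (Matrix.of fun a b => X (p, a) (q, b)))
              (fun i => G i' i) (fun j => B j' j) := by
        refine Finset.sum_congr rfl fun p _ => Finset.sum_congr rfl fun q _ => ?_
        exact pair_rows (φ (Matrix.of fun a b => X (p, a) (q, b))) W V G B p q
    _ = ∑ p : Fin m, ∑ i', ∑ q : Fin m, ∑ j',
          ((starRingEnd ℂ) (W p i') * V q j') *
            pair (φ (Matrix.of fun a b => X (p, a) (q, b)))
              (fun i => G i' i) (fun j => B j' j) :=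
        Finset.sum_congr rfl fun p _ => Finset.sum_comm
    _ = ∑ i', ∑ p : Fin m, ∑ q : Fin m, ∑ j',
          ((starRingEnd ℂ) (W p i') * V q j') *
            pair (φ (Matrix.of fun a b => X (p, a) (q, b)))
              (fun i => G i' i) (fun j => B j' j) := Finset.sum_comm
    _ = ∑ i', ∑ p : Fin m, ∑ j', ∑ q : Fin m,
          ((starRingEnd ℂ) (W p i') * V q j') *
            pair (φ (Matrix.of fun a b => X (p, a) (q, b)))
              (fun i => G i' i) (fun j => B j' j) :=
        Finset.sum_congr rfl fun i' _ => Finset.sum_congr rfl fun p _ => Finset.sum_comm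
    _ = ∑ i', ∑ j', ∑ p : Fin m, ∑ q : Fin m,
          ((starRingEnd ℂ) (W p i') * V q j') *
            pair (φ (Matrix.of fun a b => X (p, a) (q, b)))
              (fun i => G i' i) (fun j => B j' j) :=
        Finset.sum_congr rfl fun i' _ => Finset.sum_comm
    _ = ∑ i' : Fin k, ∑ j' : Fin k,
          pair (Matrix.of fun i j =>
              (ampl k φ ((W ⊗ₖ (1 : Matrix (Fin n) (Fin n) ℂ))ᴴ * X *
                (V ⊗ₖ (1 : Matrix (Fin n) (Fin n) ℂ)))) (i', i) (j', j))
            (fun i => G i' i) (fun j => B j' j) := by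
        refine Finset.sum_congr rfl fun i' _ => Finset.sum_congr rfl fun j' _ => ?_
        have hblock : (Matrix.of fun (a b : Fin n) =>
            ((W ⊗ₖ (1 : Matrix (Fin n) (Fin n) ℂ))ᴴ * X
              * (V ⊗ₖ (1 : Matrix (Fin n) (Fin n) ℂ))) (i', a) (j', b))
            = ∑ pq : Fin m × Fin m, ((starRingEnd ℂ) (W pq.1 i') * V pq.2 j') •
              (Matrix.of fun (a b : Fin n) => X (pq.1, a) (pq.2, b)) :=
          conj_block X V W i' j'
        show _ = pair (φ (Matrix.of fun (a b : Fin n) =>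
            ((W ⊗ₖ (1 : Matrix (Fin n) (Fin n) ℂ))ᴴ * X
              * (V ⊗ₖ (1 : Matrix (Fin n) (Fin n) ℂ))) (i', a) (j', b)))
          (fun i => G i' i) (fun j => B j' j)
        rw [hblock, _root_.map_sum]
        rw [show (∑ pq : Fin m × Fin m, φ (((starRingEnd ℂ) (W pq.1 i') * V pq.2 j') •
              (Matrix.of fun (a b : Fin n) => X (pq.1, a) (pq.2, b))))
            = ∑ pq : Fin m × Fin m, ((starRingEnd ℂ) (W pq.1 i') * V pq.2 j') •
              φ (Matrix.of fun (a b : Fin n) => X (pq.1, a) (pq.2, b)) from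
          Finset.sum_congr rfl fun pq _ => map_smul φ _ _, pair_sum_smul,
          Fintype.sum_prod_type]


lemma enorm_single (i : ι) : enorm (Pi.single i (1 : ℂ)) = 1 := by
  rw [enorm, WithLp.equiv_symm_apply, PiLp.norm_toLp_single, norm_one]

lemma opN_entry_le (X : Matrix ι ι ℂ) (i j : ι) : ‖X i j‖ ≤ opN X := by
  have h := dot_le_opN X (Pi.single j 1) (Pi.single i 1)
  have hd : star (Pi.single i (1 : ℂ)) ⬝ᵥ X *ᵥ Pi.single j 1 = X i j := by
    simp [dotProduct, Pi.star_apply, Pi.single_apply, apply_ite (star : ℂ → ℂ),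
      star_zero, star_one, ite_mul, zero_mul, one_mul, Finset.sum_ite_eq,
      Matrix.mulVec_single]
  rw [hd, enorm_single, enorm_single, mul_one, mul_one] at h
  exact h

set_option synthInstance.maxHeartbeats 1000000 in
lemma opN_sum_le {β : Type*} [Fintype β] (f : β → Matrix ι ι ℂ) :
    opN (∑ x, f x) ≤ ∑ x, opN (f x) := by
  unfold opN
  rw [_root_.map_sum]
  exact norm_sum_le _ _

set_option synthInstance.maxHeartbeats 1000000 in
lemma opN_smul (c : ℂ) (M : Matrix ι ι ℂ) : opN (c • M) = ‖c‖ * opN M := by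
  unfold opN
  rw [_root_.map_smul]
  exact norm_smul c (Matrix.toEuclideanCLM (𝕜 := ℂ) M :
    EuclideanSpace ℂ ι →L[ℂ] EuclideanSpace ℂ ι)

lemma mapNorm_nonneg {a b : Type*} [Fintype a] [DecidableEq a] [Fintype b] [DecidableEq b]
    (ψ : Matrix a a ℂ →ₗ[ℂ] Matrix b b ℂ) : 0 ≤ mapNorm ψ :=
  Real.sSup_nonneg (by rintro r ⟨X, hX, rfl⟩; exact opN_nonneg _)

lemma bddAbove_mapNormSet {a b : Type*} [Fintype a] [DecidableEq a] [Fintype b] [DecidableEq b]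
    (ψ : Matrix a a ℂ →ₗ[ℂ] Matrix b b ℂ) :
    BddAbove {r : ℝ | ∃ X : Matrix a a ℂ, opN X ≤ 1 ∧ r = opN (ψ X)} := by
  use ∑ i : a, ∑ j : a, opN (ψ (Matrix.single i j 1))
  rintro r ⟨X, hX, rfl⟩
  have hsm : ∀ i j, ψ (Matrix.single i j (X i j))
      = X i j • ψ (Matrix.single i j 1) := fun i j => by
    rw [← _root_.map_smul ψ, Matrix.smul_single, smul_eq_mul, mul_one]
  calc opN (ψ X) = opN (∑ i, ∑ j, X i j • ψ (Matrix.single i j 1)) := by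
        conv_lhs => rw [Matrix.matrix_eq_sum_single X]
        rw [_root_.map_sum]
        refine congrArg opN (Finset.sum_congr rfl fun i _ => ?_)
        rw [_root_.map_sum]
        exact Finset.sum_congr rfl fun j _ => hsm i j
    _ ≤ ∑ i, opN (∑ j, X i j • ψ (Matrix.single i j 1)) := opN_sum_le _
    _ ≤ ∑ i, ∑ j, opN (X i j • ψ (Matrix.single i j 1)) :=
        Finset.sum_le_sum fun i _ => opN_sum_le _
    _ ≤ ∑ i, ∑ j, opN (ψ (Matrix.single i j 1)) := by
        refine Finset.sum_le_sum fun i _ => Finset.sum_le_sum fun j _ => ?_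
        rw [opN_smul]
        have h1 : ‖X i j‖ ≤ 1 := (opN_entry_le X i j).trans hX
        nlinarith [opN_nonneg (ψ (Matrix.single i j 1)), norm_nonneg (X i j)]

lemma opN_le_mapNorm {a b : Type*} [Fintype a] [DecidableEq a] [Fintype b] [DecidableEq b]
    (ψ : Matrix a a ℂ →ₗ[ℂ] Matrix b b ℂ) {X : Matrix a a ℂ} (hX : opN X ≤ 1) :
    opN (ψ X) ≤ mapNorm ψ :=
  le_csSup (bddAbove_mapNormSet ψ) ⟨X, hX, rfl⟩

lemma opN_of_isEmpty {e : Type*} [Fintype e] [DecidableEq e] [IsEmpty e] (Y : Matrix e e ℂ) :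
    opN Y = 0 := by
  have hsub : ∀ z : EuclideanSpace ℂ e, z = 0 := fun z => by
    ext i
    exact isEmptyElim i
  have h : (Matrix.toEuclideanCLM (𝕜 := ℂ) Y :
      EuclideanSpace ℂ e →L[ℂ] EuclideanSpace ℂ e) = 0 := by
    refine ContinuousLinearMap.ext fun z => ?_
    rw [hsub z, map_zero, ContinuousLinearMap.zero_apply]
  unfold opN
  rw [h, norm_zero]

lemma smith_key {n k : ℕ} (φ : Matrix (Fin n) (Fin n) ℂ →ₗ[ℂ] Matrix (Fin k) (Fin k) ℂ)
    (m : ℕ) : mapNorm (ampl m φ) ≤ mapNorm (ampl k φ) := by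
  apply Real.sSup_le _ (mapNorm_nonneg _)
  rintro r ⟨X, hX, rfl⟩
  apply opN_le_of_dot (mapNorm_nonneg _)
  intro x y hx hy
  obtain ⟨V, B, hA, hVc, hBfrob⟩ := polar (Matrix.of fun (q : Fin m) (j : Fin k) => x (q, j))
  obtain ⟨W, G, hC, hWc, hGfrob⟩ := polar (Matrix.of fun (p : Fin m) (i : Fin k) => y (p, i))
  have hx' : x = fun q : Fin m × Fin k => (V * B) q.1 q.2 := by
    funext q
    have h := congrFun (congrFun hA q.1) q.2
    simpa using h
  have hy' : y = fun p : Fin m × Fin k => (W * G) p.1 p.2 := by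
    funext p
    have h := congrFun (congrFun hC p.1) p.2
    simpa using h
  rw [hx', hy', ampl_dot]
  have hX' : opN ((W ⊗ₖ (1 : Matrix (Fin n) (Fin n) ℂ))ᴴ * X
      * (V ⊗ₖ (1 : Matrix (Fin n) (Fin n) ℂ))) ≤ 1 :=
    opN_conj _ _ _ (fun u => enorm_kron_one_mulVec hWc u)
      (fun u => enorm_kron_one_mulVec hVc u) hX
  have hBsq : enorm (fun q : Fin k × Fin k => B q.1 q.2) ≤ 1 := by
    have h1 : enorm (fun q : Fin k × Fin k => B q.1 q.2) ^ 2 ≤ 1 := by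
      rw [enorm_sq, Fintype.sum_prod_type]
      calc (∑ i : Fin k, ∑ j : Fin k, ‖B i j‖ ^ 2)
          = ∑ i : Fin m, ∑ j : Fin k, ‖x (i, j)‖ ^ 2 := hBfrob
        _ = enorm x ^ 2 := by rw [enorm_sq, Fintype.sum_prod_type]
        _ ≤ 1 := by nlinarith [enorm_nonneg x]
    nlinarith [enorm_nonneg (fun q : Fin k × Fin k => B q.1 q.2)]
  have hGsq : enorm (fun p : Fin k × Fin k => G p.1 p.2) ≤ 1 := by
    have h1 : enorm (fun p : Fin k × Fin k => G p.1 p.2) ^ 2 ≤ 1 := by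
      rw [enorm_sq, Fintype.sum_prod_type]
      calc (∑ i : Fin k, ∑ j : Fin k, ‖G i j‖ ^ 2)
          = ∑ i : Fin m, ∑ j : Fin k, ‖y (i, j)‖ ^ 2 := hGfrob
        _ = enorm y ^ 2 := by rw [enorm_sq, Fintype.sum_prod_type]
        _ ≤ 1 := by nlinarith [enorm_nonneg y]
    nlinarith [enorm_nonneg (fun p : Fin k × Fin k => G p.1 p.2)]
  calc ‖star (fun p : Fin k × Fin k => G p.1 p.2) ⬝ᵥ
        (ampl k φ ((W ⊗ₖ (1 : Matrix (Fin n) (Fin n) ℂ))ᴴ * X *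
          (V ⊗ₖ (1 : Matrix (Fin n) (Fin n) ℂ)))) *ᵥ (fun q : Fin k × Fin k => B q.1 q.2)‖
      ≤ opN (ampl k φ ((W ⊗ₖ (1 : Matrix (Fin n) (Fin n) ℂ))ᴴ * X *
          (V ⊗ₖ (1 : Matrix (Fin n) (Fin n) ℂ))))
        * enorm (fun p : Fin k × Fin k => G p.1 p.2)
        * enorm (fun q : Fin k × Fin k => B q.1 q.2) := dot_le_opN _ _ _
    _ ≤ mapNorm (ampl k φ) := by
        have h1 := opN_le_mapNorm (ampl k φ) hX'
        have h2 := opN_nonneg (ampl k φ ((W ⊗ₖ (1 : Matrix (Fin n) (Fin n) ℂ))ᴴ * X *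
          (V ⊗ₖ (1 : Matrix (Fin n) (Fin n) ℂ))))
        have h3 := enorm_nonneg (fun p : Fin k × Fin k => G p.1 p.2)
        have h4 := enorm_nonneg (fun q : Fin k × Fin k => B q.1 q.2)
        have h5 := mapNorm_nonneg (ampl k φ)
        have hstep1 : opN (ampl k φ ((W ⊗ₖ (1 : Matrix (Fin n) (Fin n) ℂ))ᴴ * X *
            (V ⊗ₖ (1 : Matrix (Fin n) (Fin n) ℂ))))
            * enorm (fun p : Fin k × Fin k => G p.1 p.2) ≤ mapNorm (ampl k φ) := by
          nlinarith [mul_le_mul_of_nonneg_left hGsq h2]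
        nlinarith [mul_le_mul_of_nonneg_left hBsq (mul_nonneg h2 h3)]

end SmithAux

/-- Smith's stabilization: `‖φ‖_cb = ‖id_k ⊗ φ‖` for `φ : M_n → M_k`. -/
theorem cbNorm_eq_mapNorm_ampl_k {n k : ℕ}
    (φ : Matrix (Fin n) (Fin n) ℂ →ₗ[ℂ] Matrix (Fin k) (Fin k) ℂ) :
    cbNorm φ = mapNorm (ampl k φ) := by
  set f : ℕ → ℝ := fun m => mapNorm (ampl m φ) with hf
  have hub : ∀ m, f m ≤ f k := fun m => SmithAux.smith_key φ m
  have hbdd : BddAbove (Set.range fun m : ℕ => f (m + 1)) := by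
    refine ⟨f k, ?_⟩
    rintro r ⟨m, rfl⟩
    exact hub (m + 1)
  have hcb : cbNorm φ = ⨆ m : ℕ, f (m + 1) := rfl
  rw [hcb]
  apply le_antisymm
  · exact Real.iSup_le (fun m => hub (m + 1)) (SmithAux.mapNorm_nonneg _)
  · rcases Nat.eq_zero_or_pos k with hk | hk
    · have h0 : f k ≤ 0 := by
        subst hk
        apply Real.sSup_le _ le_rfl
        rintro r ⟨X, hX, rfl⟩
        rw [SmithAux.opN_of_isEmpty]
      exact h0.trans (Real.iSup_nonneg fun m => SmithAux.mapNorm_nonneg _)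
    · have hk1 : k - 1 + 1 = k := Nat.succ_pred_eq_of_pos hk
      have h := le_ciSup hbdd (k - 1)
      rwa [hk1] at h
end
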